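/- Let G be a countable group and K a field. If G is of K-linear Markov type, then the group algebra K[G] is one-sided Noetherian. -/

import Mathlib

def shiftSigma (G : Type*) [Group G] {A : Type*} (D : Set G) (P : Set (D → A)) :
    Set (G → A) :=
  {x | ∀ g : G, (fun d : D => x (g * (d : G))) ∈ P}

def prodiscreteTop (G A : Type*) : TopologicalSpace (G → A) :=
  @Pi.topologicalSpace G (fun _ => A) (fun _ => ⊥)

def IsLinearSubshift (K : Type*) {G A : Type*} [Field K] [Group G] [AddCommGroup A]
    [Module K A] (S : Set (G → A)) : Prop :=
  (∃ M : Submodule K (G → A), (M : Set (G → A)) = S) ∧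
    (∀ g : G, ∀ x ∈ S, (fun h => x (g⁻¹ * h)) ∈ S) ∧
    @IsClosed _ (prodiscreteTop G A) S

def IsSFT {G A : Type*} [Group G] (S : Set (G → A)) : Prop :=
  ∃ (D : Finset G) (P : Set (↥(D : Set G) → A)), S = shiftSigma G (D : Set G) P

def IsLCA (K : Type*) {G A : Type*} [Field K] [Group G] [AddCommGroup A] [Module K A]
    (τ : (G → A) → (G → A)) : Prop :=
  IsLinearMap K τ ∧ ∃ (M : Finset G) (μ : (↥(M : Set G) → A) → A), IsLinearMap K μ ∧
    ∀ (x : G → A) (g : G), τ x g = μ (fun m : (M : Set G) => x (g * (m : G)))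

set_option linter.unusedSectionVars false
noncomputable section
namespace Stmt11Aux

section Fin
variable {K : Type} [Field K] {ι : Type} [Fintype ι]

def fpair (q p : ι → K) : K := ∑ i, q i * p i

def fpairL (p : ι → K) : (ι → K) →ₗ[K] K where
  toFun q := fpair q p
  map_add' a b := by simp [fpair, add_mul, Finset.sum_add_distrib]
  map_smul' c a := by simp [fpair, mul_assoc, Finset.mul_sum]

def fperp (W : Submodule K (ι → K)) : Submodule K (ι → K) where
  carrier := {q | ∀ p ∈ W, fpair q p = 0}
  add_mem' := by
    intro a b ha hb p hp
    have h : fpair (a + b) p = fpair a p + fpair b p := (fpairL p).map_add a b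
    rw [h, ha p hp, hb p hp, add_zero]
  zero_mem' := by intro p hp; simp [fpair]
  smul_mem' := by
    intro c a ha p hp
    have h : fpair (c • a) p = c * fpair a p := (fpairL p).map_smul c a
    rw [h, ha p hp, mul_zero]

lemma fpair_dual [DecidableEq ι] (ψ : Module.Dual K (ι → K)) (p : ι → K) :
    fpair (fun i => ψ (Pi.single i 1)) p = ψ p := by
  conv_rhs => rw [show p = ∑ i, Pi.single i (p i) from (Finset.univ_sum_single p).symm]
  rw [map_sum, fpair]
  refine Finset.sum_congr rfl fun i _ => ?_
  have h : Pi.single i (p i) = p i • (Pi.single i (1 : K) : ι → K) := by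
    ext j
    by_cases h : j = i <;> simp [Pi.single_apply, h]
  rw [h, map_smul, smul_eq_mul, mul_comm]

lemma fin_biorth (W : Submodule K (ι → K)) (p : ι → K)
    (h : ∀ q ∈ fperp W, fpair q p = 0) : p ∈ W := by
  classical
  by_contra hp
  have h0 : W.mkQ p ≠ 0 := by simpa [Submodule.Quotient.mk_eq_zero] using hp
  obtain ⟨ψ0, hψ0⟩ := not_forall.1 fun h' => h0 ((Module.forall_dual_apply_eq_zero_iff K _).1 h')
  set ψ : Module.Dual K (ι → K) := ψ0.comp W.mkQ with hψ
  have hq : (fun i => ψ (Pi.single i 1)) ∈ fperp W := by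
    intro w hw
    rw [fpair_dual]
    simp [hψ, (Submodule.Quotient.mk_eq_zero W).2 hw]
  have h2 := h _ hq
  rw [fpair_dual] at h2
  exact hψ0 h2

end Fin

variable {G : Type} {K : Type} [Group G] [Field K]

def pairL : MonoidAlgebra K G →ₗ[K] (G → K) →ₗ[K] K :=
  (Finsupp.lsum K fun g =>
    { toFun := fun c => c • LinearMap.proj g
      map_add' := by intros; simp [add_smul]
      map_smul' := by intros; simp [mul_smul] }) ∘ₗ
    (MonoidAlgebra.coeffLinearEquiv K).toLinearMap

@[simp] lemma pairL_single (g : G) (c : K) (x : G → K) :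
    pairL (MonoidAlgebra.single g c) x = c * x g := by
  simp [pairL, smul_eq_mul]

lemma pairL_single_one_mul (g : G) (a : MonoidAlgebra K G) (x : G → K) :
    pairL (MonoidAlgebra.single g 1 * a : MonoidAlgebra K G) x
      = pairL a (fun h => x (g * h)) := by
  induction a using MonoidAlgebra.induction_linear with
  | zero => simp
  | add f g hf hg =>
      rw [mul_add]
      rw [map_add, map_add, LinearMap.add_apply, LinearMap.add_apply, hf, hg]
  | single k c =>
      have h : (MonoidAlgebra.single g 1 * MonoidAlgebra.single k c : MonoidAlgebra K G)
          = MonoidAlgebra.single (g * k) c := by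
        rw [MonoidAlgebra.single_mul_single, one_mul]
      rw [h]
      show pairL (MonoidAlgebra.single (g*k) c) x = pairL (MonoidAlgebra.single k c) _
      simp

def perp1 (V : Submodule K (MonoidAlgebra K G)) : Submodule K (G → K) where
  carrier := {x | ∀ a ∈ V, pairL a x = 0}
  add_mem' := by intro x y hx hy a ha; simp [map_add, hx a ha, hy a ha]
  zero_mem' := by intro a ha; simp
  smul_mem' := by intro c x hx a ha; simp [map_smul, hx a ha]

def perp2 (S : Set (G → K)) : Submodule K (MonoidAlgebra K G) where
  carrier := {a | ∀ x ∈ S, pairL a x = 0}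
  add_mem' := by intro a b ha hb x hx; simp [ha x hx, hb x hx]
  zero_mem' := by intro x hx; simp
  smul_mem' := by intro c a ha x hx; simp [ha x hx]

lemma pairL_eq_dual (φ : Module.Dual K (MonoidAlgebra K G)) (a : MonoidAlgebra K G) :
    pairL a (fun g => φ (MonoidAlgebra.single g 1)) = φ a := by
  induction a using MonoidAlgebra.induction_linear with
  | zero => simp
  | add f g hf hg => simp [map_add, hf, hg]
  | single g c =>
      rw [pairL_single]
      rw [← smul_eq_mul, ← map_smul, MonoidAlgebra.smul_single, smul_eq_mul, mul_one]

lemma perp2_perp1 (V : Submodule K (MonoidAlgebra K G)) : perp2 (perp1 V : Set (G → K)) = V := by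
  ext a
  constructor
  · intro ha
    by_contra hav
    have h0 : V.mkQ a ≠ 0 := by
      simpa [Submodule.Quotient.mk_eq_zero] using hav
    obtain ⟨ψ, hψ⟩ := (not_forall.1 (fun h => h0 ((Module.forall_dual_apply_eq_zero_iff K _).1 h)))
    set φ : Module.Dual K (MonoidAlgebra K G) := ψ.comp V.mkQ with hφ
    set x : G → K := fun g => φ (MonoidAlgebra.single g 1) with hx
    have hxperp : x ∈ perp1 V := by
      intro b hb
      rw [pairL_eq_dual φ b]
      simp [hφ, (Submodule.Quotient.mk_eq_zero V).2 hb]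
    have h1 := ha x hxperp
    rw [pairL_eq_dual φ a] at h1
    exact hψ h1
  · intro haV x hx
    exact hx a haV

lemma pairL_sum (a : MonoidAlgebra K G) (x : G → K) :
    pairL a x = a.coeff.sum fun g c => c * x g := by
  induction a using MonoidAlgebra.induction_linear with
  | zero => simp
  | add f g hf hg =>
      rw [map_add, LinearMap.add_apply, hf, hg, MonoidAlgebra.coeff_add,
        Finsupp.sum_add_index' (fun g => zero_mul (x g)) (fun g c d => add_mul c d (x g))]
  | single g c =>
      rw [pairL_single, MonoidAlgebra.coeff_single, Finsupp.sum_single_index (zero_mul (x g))]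

lemma perp1_closed (V : Submodule K (MonoidAlgebra K G)) :
    @IsClosed _ (prodiscreteTop G K) (perp1 V : Set (G → K)) := by
  letI : TopologicalSpace K := ⊥
  haveI : DiscreteTopology K := ⟨rfl⟩
  rw [show prodiscreteTop G K = (Pi.topologicalSpace : TopologicalSpace (G → K)) from rfl]
  have hrepr : (perp1 V : Set (G → K)) = ⋂ a ∈ (V : Set (MonoidAlgebra K G)), {x | pairL a x = 0} := by
    ext x
    simp only [Set.mem_iInter, Set.mem_setOf_eq, SetLike.mem_coe]
    exact Iff.rfl
  rw [hrepr]
  refine isClosed_biInter fun a ha => ?_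
  have hset : {x : G → K | pairL a x = 0}
      = (fun x : G → K => fun i : a.coeff.support => x i) ⁻¹'
        {y : ↥a.coeff.support → K | ∑ i : ↥a.coeff.support, a.coeff i * y i = 0} := by
    ext x
    simp only [Set.mem_setOf_eq, Set.mem_preimage]
    rw [pairL_sum, Finsupp.sum, Finset.sum_coe_sort a.coeff.support (fun g => a.coeff g * x g)]
  rw [hset]
  have hcont : Continuous (fun x : G → K => fun i : a.coeff.support => x i) :=
    continuous_pi fun i => continuous_apply _
  exact (isClosed_discrete _).preimage hcont

lemma perp2_mul {S : Set (G → K)} (hshift : ∀ g : G, ∀ x ∈ S, (fun h => x (g⁻¹ * h)) ∈ S)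
    (r a : MonoidAlgebra K G) (ha : a ∈ perp2 S) :
    r * a ∈ perp2 S := by
  refine MonoidAlgebra.induction_linear
    (motive := fun r : MonoidAlgebra K G => r * a ∈ perp2 S) r ?_ ?_ ?_
  · show (0 : MonoidAlgebra K G) * a ∈ perp2 S
    rw [zero_mul]
    exact (perp2 S).zero_mem
  · intro f g hf hg
    have h3 : ∀ f' g' : MonoidAlgebra K G, f' * a ∈ perp2 S → g' * a ∈ perp2 S →
        (f' + g') * a ∈ perp2 S := by
      intro f' g' hh1 hh2
      rw [add_mul]
      exact (perp2 S).add_mem hh1 hh2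
    exact h3 f g hf hg
  · intro g c
    have h1 : (MonoidAlgebra.single g 1 : MonoidAlgebra K G) * a ∈ perp2 S := by
      intro x hx
      rw [pairL_single_one_mul]
      have hx2 := hshift g⁻¹ x hx
      rw [inv_inv] at hx2
      exact ha _ hx2
    have h2 : (MonoidAlgebra.single g c : MonoidAlgebra K G) * a
        = c • ((MonoidAlgebra.single g 1 : MonoidAlgebra K G) * a) := by
      rw [show (MonoidAlgebra.single g c : MonoidAlgebra K G)
            = c • (MonoidAlgebra.single g 1 : MonoidAlgebra K G) by
          rw [MonoidAlgebra.smul_single', mul_one], smul_mul_assoc]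
    rw [h2]
    exact (perp2 S).smul_mem c h1

def perp2' (S : Set (G → K)) (hshift : ∀ g : G, ∀ x ∈ S, (fun h => x (g⁻¹ * h)) ∈ S) :
    Submodule (MonoidAlgebra K G) (MonoidAlgebra K G) where
  carrier := (perp2 S : Set (MonoidAlgebra K G))
  add_mem' := fun {a b} ha hb => (perp2 S).add_mem ha hb
  zero_mem' := (perp2 S).zero_mem
  smul_mem' := fun r {a} ha => perp2_mul hshift r a ha

def emb (D : Finset G) (q : ↥(D : Set G) → K) : MonoidAlgebra K G :=
  ∑ d : ↥(D : Set G), MonoidAlgebra.single (d : G) (q d)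

lemma pairL_emb (D : Finset G) (q : ↥(D : Set G) → K) (x : G → K) :
    pairL (emb D q : MonoidAlgebra K G) x = fpair q (fun d : ↥(D : Set G) => x d) := by
  rw [emb, map_sum, LinearMap.sum_apply, fpair]
  exact Finset.sum_congr rfl fun d _ => pairL_single _ _ _

end Stmt11Aux

open Stmt11Aux in
theorem stmt11 {G : Type} (K : Type) [Group G] [Countable G] [Field K]
    (hMarkov : ∀ (A : Type) (_ : AddCommGroup A) (_ : Module K A),
      FiniteDimensional K A → ∀ S : Set (G → A), IsLinearSubshift K S → IsSFT S) :
    IsNoetherianRing (MonoidAlgebra K G) := by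
  classical
  rw [isNoetherianRing_iff, isNoetherian_def]
  intro I
  set V : Submodule K (MonoidAlgebra K G) := I.restrictScalars K with hVdef
  have hVmem : ∀ a : MonoidAlgebra K G, a ∈ V ↔ a ∈ I := fun a => Iff.rfl
  set S : Set (G → K) := (perp1 V : Set (G → K)) with hSdef
  have hmemS : ∀ x : G → K, x ∈ S ↔ ∀ a ∈ V, pairL a x = 0 := fun x => Iff.rfl
  -- shift invariance
  have hshift : ∀ g : G, ∀ x ∈ S, (fun h => x (g⁻¹ * h)) ∈ S := by
    intro g x hx a ha
    have h1 := I.smul_mem (MonoidAlgebra.single g⁻¹ 1 : MonoidAlgebra K G) ((hVmem a).1 ha)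
    rw [smul_eq_mul] at h1
    rw [← pairL_single_one_mul g⁻¹ a x]
    exact hx _ ((hVmem _).2 h1)
  have hsubshift : IsLinearSubshift K S := ⟨⟨perp1 V, rfl⟩, hshift, perp1_closed V⟩
  obtain ⟨D, P, hSP⟩ := hMarkov K inferInstance inferInstance inferInstance S hsubshift
  -- the restriction to the window D
  set res : (G → K) →ₗ[K] (↥(D : Set G) → K) :=
    LinearMap.funLeft K K (fun d : ↥(D : Set G) => (d : G)) with hresdef
  set W : Submodule K (↥(D : Set G) → K) := (perp1 V).map res with hWdef
  -- S is the SFT with linear window subspace W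
  have hSW : S = shiftSigma G (D : Set G) (W : Set (↥(D : Set G) → K)) := by
    ext x
    constructor
    · intro hx g
      have hy : (fun h => x (g * h)) ∈ S := by simpa using hshift g⁻¹ x hx
      exact ⟨_, hy, rfl⟩
    · intro hx
      rw [hSP]
      intro g
      obtain ⟨y, hy, hres⟩ := hx g
      have hyS : y ∈ S := hy
      rw [hSP] at hyS
      have h1 := hyS 1
      have h2 : (fun d : ↥(D : Set G) => x (g * (d : G))) = fun d : ↥(D : Set G) => y (1 * (d : G)) := by
        funext d
        rw [one_mul]
        exact (congrFun hres d).symm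
      rw [h2]
      exact h1
  -- finitely many generators for the orthogonal of W
  haveI : IsNoetherian K (↥(D : Set G) → K) := IsNoetherian.iff_fg.mpr inferInstance
  obtain ⟨T, hT⟩ := (IsNoetherian.noetherian (fperp W) : (fperp W).FG)
  set J : Submodule (MonoidAlgebra K G) (MonoidAlgebra K G) :=
    Submodule.span (MonoidAlgebra K G) (emb D '' ↑T) with hJdef
  -- perp1 of J equals perp1 of V
  have hJperp : ∀ x : G → K, x ∈ perp1 (J.restrictScalars K) ↔ x ∈ perp1 V := by
    intro x
    constructor
    · intro hx
      have hx' : ∀ a : MonoidAlgebra K G, a ∈ J → pairL a x = 0 := fun a ha => hx a ha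
      have hxS : x ∈ shiftSigma G (D : Set G) (W : Set (↥(D : Set G) → K)) := by
        intro g
        refine fin_biorth W _ (fun q hq => ?_)
        have hTker : (↑T : Set (↥(D : Set G) → K)) ⊆
            ↑(LinearMap.ker (fpairL (fun d : ↥(D : Set G) => x (g * (d : G))))) := by
          intro q' hq'
          have hJ : (MonoidAlgebra.single g 1 : MonoidAlgebra K G) • emb D q' ∈ J :=
            J.smul_mem _ (Submodule.subset_span ⟨q', hq', rfl⟩)
          have h0 := hx' _ hJ
          have h1 : ((MonoidAlgebra.single g 1 : MonoidAlgebra K G) • emb D q' :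
              MonoidAlgebra K G) = (MonoidAlgebra.single g 1 * emb D q' : MonoidAlgebra K G) := rfl
          rw [h1, pairL_single_one_mul, pairL_emb] at h0
          exact h0
        have hle : fperp W ≤ LinearMap.ker (fpairL (fun d : ↥(D : Set G) => x (g * (d : G)))) := by
          rw [← hT]
          exact Submodule.span_le.mpr hTker
        exact hle hq
      rw [← hSW] at hxS
      exact hxS
    · intro hx
      intro a ha
      have haJ : a ∈ J := ha
      have hgen : (emb D '' ↑T : Set (MonoidAlgebra K G)) ⊆ ↑(perp2' S hshift) := by
        rintro _ ⟨q, hq, rfl⟩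
        intro y hy
        rw [pairL_emb]
        have hqW : q ∈ fperp W := by rw [← hT]; exact Submodule.subset_span hq
        exact hqW _ ⟨y, hy, rfl⟩
      have hJle : J ≤ perp2' S hshift := Submodule.span_le.mpr hgen
      exact hJle haJ x hx
  have h1 : perp1 (J.restrictScalars K) = perp1 V := by
    ext x; exact hJperp x
  have h2 : J.restrictScalars K = V := by
    rw [← perp2_perp1 (J.restrictScalars K), ← perp2_perp1 V, h1]
  have hIJ : I = J := by
    ext a
    constructor
    · intro ha
      have hv : a ∈ V := (hVmem a).2 ha
      rw [← h2] at hv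
      exact hv
    · intro ha
      have hv : a ∈ J.restrictScalars K := ha
      rw [h2] at hv
      exact (hVmem a).1 hv
  rw [hIJ]
  exact Submodule.fg_span (T.finite_toSet.image _)
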